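/- A nonadditive measure μ is weakly null-additive if and only if the Sugeno-Lorentz prenorm (·)_{p,q} is weakly null-additive, i.e., (f+g)_{p,q} = 0 whenever (f)_{p,q} = (g)_{p,q} = 0. -/

import Mathlib

open scoped NNReal ENNReal
open ENNReal Filter Topology

variable {X : Type*} [MeasurableSpace X]

/-- The Sugeno integral of `g` w.r.t. a nonadditive measure `μ`:
`Su(μ,g) := sup_{t ∈ [0,∞)} min(t, μ({g > t}))`. -/
noncomputable def Su (μ : Set X → ℝ≥0∞) (g : X → ℝ≥0∞) : ℝ≥0∞ :=
  ⨆ t : ℝ≥0, min (t : ℝ≥0∞) (μ {x | (t : ℝ≥0∞) < g x})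

/-- The Sugeno-Lorentz prenorm `(f)_{p,q} := (Su(μ^{p/q}, (p/q)|f|^q))^{1/q}`. -/
noncomputable def SL (μ : Set X → ℝ≥0∞) (p q : ℝ) (f : X → ℝ) : ℝ≥0∞ :=
  (Su (fun A => μ A ^ (p / q)) (fun x => ENNReal.ofReal ((p / q) * |f x| ^ q))) ^ (1 / q)

lemma levelSet_measurable (p q : ℝ) {f : X → ℝ} (hf : Measurable f) (t : ℝ≥0) :
    MeasurableSet {x | (t : ℝ≥0∞) < ENNReal.ofReal ((p / q) * |f x| ^ q)} := by
  have : Measurable fun x => ENNReal.ofReal ((p / q) * |f x| ^ q) :=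
    ENNReal.measurable_ofReal.comp ((hf.abs.pow measurable_const).const_mul _)
  exact measurableSet_lt measurable_const this

lemma SL_eq_zero_iff (μ : Set X → ℝ≥0∞) (p q : ℝ) (hp : 0 < p) (hq : 0 < q) (f : X → ℝ) :
    SL μ p q f = 0 ↔ ∀ t : ℝ≥0, 0 < t →
      μ {x | (t : ℝ≥0∞) < ENNReal.ofReal ((p / q) * |f x| ^ q)} = 0 := by
  have hr : (0:ℝ) < p / q := div_pos hp hq
  have hq' : (0:ℝ) < 1 / q := by positivity
  unfold SL Su
  rw [ENNReal.rpow_eq_zero_iff]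
  constructor
  · rintro (⟨h, -⟩ | ⟨-, h'⟩)
    · intro t ht
      have h1 := iSup_eq_zero.mp h t
      have ht' : (t : ℝ≥0∞) ≠ 0 := by exact_mod_cast ht.ne'
      have h2 : μ {x | (t : ℝ≥0∞) < ENNReal.ofReal ((p / q) * |f x| ^ q)} ^ (p/q) = 0 := by
        rcases min_eq_iff.mp h1 with ⟨h3, -⟩ | ⟨h3, -⟩
        · exact absurd h3 ht'
        · exact h3
      rw [ENNReal.rpow_eq_zero_iff] at h2
      rcases h2 with ⟨h2, -⟩ | ⟨-, h2⟩
      · exact h2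
      · linarith
    · linarith
  · intro h
    left
    refine ⟨iSup_eq_zero.mpr fun t => ?_, hq'⟩
    rcases eq_or_lt_of_le (zero_le : (0:ℝ≥0) ≤ t) with ht | ht
    · simp [← ht]
    · have := h t ht
      simp only []; rw [this, ENNReal.zero_rpow_of_pos hr]; simp

/-- `μ` is weakly null-additive iff the Sugeno-Lorentz prenorm is weakly null-additive. -/
theorem SL_weakly_null_additive_iff
    (μ : Set X → ℝ≥0∞) (h0 : μ ∅ = 0)
    (hmono : ∀ ⦃A B : Set X⦄, MeasurableSet A → MeasurableSet B → A ⊆ B → μ A ≤ μ B)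
    (p q : ℝ) (hp : 0 < p) (hq : 0 < q) :
    (∀ A B : Set X, MeasurableSet A → MeasurableSet B → μ A = 0 → μ B = 0 →
        μ (A ∪ B) = 0) ↔
      (∀ f g : X → ℝ, Measurable f → Measurable g → SL μ p q f = 0 → SL μ p q g = 0 →
        SL μ p q (f + g) = 0) := by
  have hr : (0:ℝ) < p / q := div_pos hp hq
  constructor
  · intro hμ f g hf hg hf0 hg0
    rw [SL_eq_zero_iff μ p q hp hq] at hf0 hg0 ⊢
    intro t ht
    have ht0 : (0:ℝ) < (t:ℝ) := ht
    set c : ℝ := ((t:ℝ) / (p/q)) ^ q⁻¹ with hcdef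
    have hc0 : 0 < c := Real.rpow_pos_of_pos (div_pos ht0 hr) _
    have hcq : c ^ q = (t:ℝ) / (p/q) := Real.rpow_inv_rpow (div_pos ht0 hr).le hq.ne'
    set s : ℝ := (p/q) * (c/2) ^ q with hsdef
    have hs0 : 0 < s := mul_pos hr (Real.rpow_pos_of_pos (by linarith) _)
    set t' : ℝ≥0 := (s/2).toNNReal with ht'def
    have ht' : 0 < t' := Real.toNNReal_pos.mpr (by linarith)
    have hcoe : (t' : ℝ≥0∞) = ENNReal.ofReal (s/2) := rfl
    have hsub : {x | (t:ℝ≥0∞) < ENNReal.ofReal ((p/q) * |(f+g) x| ^ q)} ⊆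
        {x | (t':ℝ≥0∞) < ENNReal.ofReal ((p/q) * |f x| ^ q)} ∪
        {x | (t':ℝ≥0∞) < ENNReal.ofReal ((p/q) * |g x| ^ q)} := by
      intro x hx
      simp only [Set.mem_setOf_eq, Pi.add_apply] at hx
      have h1 : (t:ℝ) < (p/q) * |f x + g x| ^ q := by
        by_contra hcon
        push_neg at hcon
        have := ENNReal.ofReal_le_ofReal hcon
        rw [ENNReal.ofReal_coe_nnreal] at this
        exact absurd (lt_of_lt_of_le hx this) (lt_irrefl _)
      have h2 : c < |f x + g x| := by
        by_contra hcon
        push_neg at hcon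
        have := Real.rpow_le_rpow (abs_nonneg _) hcon hq.le
        rw [hcq] at this
        have : (p/q) * |f x + g x| ^ q ≤ (t:ℝ) := by
          calc (p/q) * |f x + g x| ^ q ≤ (p/q) * ((t:ℝ)/(p/q)) :=
                mul_le_mul_of_nonneg_left this hr.le
            _ = (t:ℝ) := by field_simp
        linarith
      have h3 : c/2 < |f x| ∨ c/2 < |g x| := by
        by_contra hcon
        push_neg at hcon
        have := abs_add_le (f x) (g x)
        linarith [hcon.1, hcon.2]
      have mem : ∀ u : ℝ, c/2 < u → (t':ℝ≥0∞) < ENNReal.ofReal ((p/q) * u ^ q) := by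
        intro u hu
        have h4 : (c/2) ^ q < u ^ q := Real.rpow_lt_rpow (by linarith) hu hq
        have h5 : s/2 < (p/q) * u ^ q := by
          have : s < (p/q) * u ^ q := (mul_lt_mul_of_pos_left h4 hr)
          linarith
        rw [hcoe]
        exact (ENNReal.ofReal_lt_ofReal_iff (by nlinarith [Real.rpow_pos_of_pos (lt_trans (by linarith) hu) q])).mpr h5
      rcases h3 with h3 | h3
      · exact Or.inl (mem _ h3)
      · exact Or.inr (mem _ h3)
    have hz := hμ _ _ (levelSet_measurable p q hf t') (levelSet_measurable p q hg t')
      (hf0 t' ht') (hg0 t' ht')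
    have := hmono (levelSet_measurable p q (hf.add hg) t)
      ((levelSet_measurable p q hf t').union (levelSet_measurable p q hg t')) hsub
    exact le_antisymm (hz ▸ this) zero_le
  · intro h A B hA hB hμA hμB
    set f : X → ℝ := A.indicator (fun _ => 1) with hfdef
    set g : X → ℝ := B.indicator (fun _ => 1) with hgdef
    have hfm : Measurable f := measurable_const.indicator hA
    have hgm : Measurable g := measurable_const.indicator hB
    have hind0 : ∀ (S : Set X) (x : X), x ∉ S → S.indicator (fun _ => (1:ℝ)) x = 0 :=
      fun S x hx => Set.indicator_of_notMem hx _
    have hzero : ∀ (S : Set X), MeasurableSet S → μ S = 0 →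
        SL μ p q (S.indicator (fun _ => 1)) = 0 := by
      intro S hS hμS
      rw [SL_eq_zero_iff μ p q hp hq]
      intro t ht
      have hsub : {x | (t:ℝ≥0∞) < ENNReal.ofReal ((p/q) * |S.indicator (fun _ => (1:ℝ)) x| ^ q)}
          ⊆ S := by
        intro x hx
        by_contra hxS
        simp only [Set.mem_setOf_eq, hind0 S x hxS, abs_zero, Real.zero_rpow hq.ne',
          mul_zero, ENNReal.ofReal_zero] at hx
        exact absurd hx (by simp)
      have := hmono (levelSet_measurable p q (measurable_const.indicator hS) t) hS hsub
      exact le_antisymm (hμS ▸ this) zero_le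
    have hfg := h f g hfm hgm (hzero A hA hμA) (hzero B hB hμB)
    rw [SL_eq_zero_iff μ p q hp hq] at hfg
    set t : ℝ≥0 := ((p/q)/2).toNNReal with htdef
    have ht : 0 < t := Real.toNNReal_pos.mpr (by linarith)
    have hcoe : (t : ℝ≥0∞) = ENNReal.ofReal ((p/q)/2) := rfl
    have hsub : A ∪ B ⊆ {x | (t:ℝ≥0∞) < ENNReal.ofReal ((p/q) * |(f+g) x| ^ q)} := by
      intro x hx
      have hfnn : 0 ≤ f x := Set.indicator_nonneg (fun _ _ => zero_le_one) x
      have hgnn : 0 ≤ g x := Set.indicator_nonneg (fun _ _ => zero_le_one) x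
      have h1 : (1:ℝ) ≤ f x + g x := by
        rcases hx with hx | hx
        · have : f x = 1 := Set.indicator_of_mem hx _
          linarith
        · have : g x = 1 := Set.indicator_of_mem hx _
          linarith
      have h2 : (1:ℝ) ≤ |(f+g) x| ^ q := by
        have : (1:ℝ) ^ q ≤ |(f+g) x| ^ q := by
          apply Real.rpow_le_rpow zero_le_one _ hq.le
          simp only [Pi.add_apply]
          exact le_trans h1 (le_abs_self _)
        rwa [Real.one_rpow] at this
      have h3 : (p/q)/2 < (p/q) * |(f+g) x| ^ q := by nlinarith
      simp only [Set.mem_setOf_eq, hcoe]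
      exact (ENNReal.ofReal_lt_ofReal_iff (by nlinarith)).mpr h3
    have := hmono (hA.union hB) (levelSet_measurable p q (hfm.add hgm) t) hsub
    exact le_antisymm ((hfg t ht) ▸ this) zero_le
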